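/- Let $\bar\omega : \Delta^2(I) \to \mathbb{R}_{\geq 0}$ be a control function on a compact interval $I = [a,b]$, continuous in $(s,t)$, with $\bar\omega_{t,t} = 0$. Fix $\gamma > 0$ and define the greedy sequence $\tau_0 = a$, $\tau_{i+1} = \inf\{t > \tau_i : \bar\omega_{\tau_i, t} = \gamma^p\} \wedge b$, and let $N := \sup\{i : \tau_i < b\} + 1$ be the number of intervals. Then $N \leq 1 + \gamma^{-p} \bar\omega_{a,b}$. -/
import Mathlib


/-- Bound on the number of greedy stopping times of a control: if each full
subinterval of the greedy sequence exhausts `γ^p` worth of the control, then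
superadditivity forces `N ≤ 1 + γ^{-p} ω(a,b)`. -/
theorem greedy_times_bound (a b : ℝ) (hab : a ≤ b)
    (ω : ℝ → ℝ → ℝ)
    (hω_nonneg : ∀ s t, a ≤ s → s ≤ t → t ≤ b → 0 ≤ ω s t)
    (hω_diag : ∀ t, a ≤ t → t ≤ b → ω t t = 0)
    (hω_super : ∀ s u t, a ≤ s → s ≤ u → u ≤ t → t ≤ b → ω s u + ω u t ≤ ω s t)
    (γ p : ℝ) (hγ : 0 < γ) (hp : 1 ≤ p)
    (τ : ℕ → ℝ) (N : ℕ)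
    (hτ0 : τ 0 = a) (hτmono : Monotone τ) (hτmem : ∀ i, τ i ∈ Set.Icc a b)
    (hfull : ∀ i : ℕ, i + 1 < N → ω (τ i) (τ (i + 1)) = γ ^ p) :
    (N : ℝ) ≤ 1 + γ ^ (-p) * ω a b := by
  have hγp : (0:ℝ) < γ ^ p := Real.rpow_pos_of_pos hγ p
  have key : ∀ k : ℕ, k + 1 ≤ N → (k : ℝ) * γ ^ p ≤ ω a (τ k) := by
    intro k
    induction k with
    | zero =>
      intro _
      rw [hτ0]
      simp [hω_diag a le_rfl hab]
    | succ k ih =>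
      intro hk
      have hk' : k + 1 ≤ N := le_of_lt (Nat.lt_of_succ_le hk)
      have h1 : ω a (τ k) + ω (τ k) (τ (k + 1)) ≤ ω a (τ (k + 1)) :=
        hω_super a (τ k) (τ (k+1)) le_rfl (hτmem k).1
          (hτmono (Nat.le_succ k)) (hτmem (k+1)).2
      have h2 := hfull k (Nat.lt_of_succ_le hk)
      have := ih hk'
      push_cast
      nlinarith
  rcases Nat.eq_zero_or_pos N with hN | hN
  · subst hN
    have := hω_nonneg a b le_rfl hab le_rfl
    simp
    positivity
  · obtain ⟨M, rfl⟩ := Nat.exists_eq_succ_of_ne_zero (Nat.pos_iff_ne_zero.mp hN)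
    have h1 : (M : ℝ) * γ ^ p ≤ ω a (τ M) := key M le_rfl
    have h2 : ω a (τ M) + ω (τ M) b ≤ ω a b :=
      hω_super a (τ M) b le_rfl (hτmem M).1 (hτmem M).2 le_rfl
    have h3 : 0 ≤ ω (τ M) b := hω_nonneg (τ M) b (hτmem M).1 (hτmem M).2 le_rfl
    have hM : (M : ℝ) * γ ^ p ≤ ω a b := by linarith
    have hinv : γ ^ (-p) = (γ ^ p)⁻¹ := Real.rpow_neg hγ.le p
    rw [hinv]
    push_cast
    have : (M : ℝ) ≤ (γ ^ p)⁻¹ * ω a b := by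
      rw [inv_mul_eq_div, le_div_iff₀ hγp]
      linarith [mul_comm (M : ℝ) (γ ^ p)]
    linarith
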